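/- Let T be a tree (connected acyclic graph) with a labeling l : V(T) → [0,∞), and define d_l(u,v) = 0 if u = v and d_l(u,v) = max of l over the vertices of the unique path from u to v otherwise. Then d_l is an ultrametric on V(T) if and only if max{l(u), l(v)} > 0 for every edge {u,v} of T. -/

import Mathlib

/-- An ultrametric on a type `X`. -/
def IsUltrametricOn {X : Type*} (d : X → X → ℝ) : Prop :=
  (∀ x y, 0 ≤ d x y) ∧ (∀ x y, d x y = d y x) ∧ (∀ x y, d x y = 0 ↔ x = y) ∧
    ∀ x y z, d x y ≤ max (d x z) (d z y)

/-- Let `T` be a finite tree with a nonnegative labeling `l`, and let `D = d_l` be the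
function with `D u u = 0` and, for `u ≠ v`, `D u v` the maximum label over the vertices
of the (unique) path joining `u` and `v`. Then `D` is an ultrametric on the vertex set
iff `max (l u) (l v) > 0` for every edge `{u,v}` of `T`. -/
theorem labeled_tree_ultrametric_iff {V : Type*} [Fintype V] (G : SimpleGraph V)
    (hT : G.IsTree) (l : V → ℝ) (hl : ∀ v, 0 ≤ l v) (D : V → V → ℝ)
    (hD0 : ∀ u, D u u = 0)
    (hDpath : ∀ u v, u ≠ v → ∀ p : G.Walk u v, p.IsPath →
      (D u v : WithBot ℝ) = (p.support.map l).maximum) :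
    IsUltrametricOn D ↔ ∀ u v, G.Adj u v → 0 < max (l u) (l v) := by
  classical
  have hpath : ∀ u v : V, ∃ p : G.Walk u v, p.IsPath := by
    intro u v
    obtain ⟨w⟩ := hT.isConnected.preconnected u v
    exact ⟨w.toPath.1, w.toPath.2⟩
  have key : ∀ (u v : V), u ≠ v → ∀ p : G.Walk u v, p.IsPath →
      (∃ w ∈ p.support, D u v = l w) ∧ ∀ x ∈ p.support, l x ≤ D u v := by
    intro u v hne p hp
    have hD := hDpath u v hne p hp
    constructor
    · have hmem := List.maximum_mem hD.symm
      obtain ⟨w, hw, hlw⟩ := List.mem_map.mp hmem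
      exact ⟨w, hw, hlw.symm⟩
    · intro x hx
      have h1 : (l x : WithBot ℝ) ≤ (p.support.map l).maximum :=
        List.le_maximum_of_mem' (List.mem_map_of_mem (f := l) hx)
      rw [← hD] at h1
      exact_mod_cast h1
  constructor
  · rintro ⟨hnn, hsym, heq, _⟩ u v huv
    have hne : u ≠ v := huv.ne
    have hp : (SimpleGraph.Path.singleton huv : G.Walk u v).IsPath :=
      (SimpleGraph.Path.singleton huv).2
    obtain ⟨⟨w, hw, hDw⟩, hub⟩ := key u v hne _ hp
    have hsupp : (SimpleGraph.Path.singleton huv : G.Walk u v).support = [u, v] := by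
      simp [SimpleGraph.Path.singleton]
    rw [hsupp] at hw
    have hD0' : D u v ≠ 0 := fun h => hne ((heq u v).mp h)
    have hle : D u v ≤ max (l u) (l v) := by
      simp only [List.mem_cons, List.mem_singleton, List.not_mem_nil, or_false] at hw
      rcases hw with rfl | rfl
      · rw [hDw]; exact le_max_left _ _
      · rw [hDw]; exact le_max_right _ _
    have h0 : 0 < D u v := lt_of_le_of_ne (hnn u v) (Ne.symm hD0')
    exact lt_of_lt_of_le h0 hle
  · intro hpos
    have hnn : ∀ x y, 0 ≤ D x y := by
      intro x y
      by_cases h : x = y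
      · subst h; rw [hD0]
      · obtain ⟨p, hp⟩ := hpath x y
        obtain ⟨⟨w, _, hDw⟩, _⟩ := key x y h p hp
        rw [hDw]; exact hl w
    have hle : ∀ x y, x ≠ y → D x y ≤ D y x := by
      intro x y h
      obtain ⟨p, hp⟩ := hpath x y
      obtain ⟨⟨w, hw, hDw⟩, _⟩ := key x y h p hp
      obtain ⟨_, hub⟩ := key y x (Ne.symm h) p.reverse hp.reverse
      rw [hDw]
      exact hub w (by simpa [SimpleGraph.Walk.support_reverse] using hw)
    refine ⟨hnn, ?_, ?_, ?_⟩
    · intro x y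
      by_cases h : x = y
      · subst h; rfl
      · exact le_antisymm (hle x y h) (hle y x (Ne.symm h))
    · intro x y
      constructor
      · intro hzero
        by_contra h
        obtain ⟨p, hp⟩ := hpath x y
        cases p with
        | nil => exact h rfl
        | cons hadj q =>
          rename_i b
          obtain ⟨-, hub⟩ := key x y h _ hp
          have hbx : l x ≤ 0 := by
            rw [← hzero]; exact hub x (SimpleGraph.Walk.start_mem_support _)
          have hbb : l b ≤ 0 := by
            rw [← hzero]
            exact hub b (by simp [SimpleGraph.Walk.support_cons,
              SimpleGraph.Walk.start_mem_support])
          have := hpos x b hadj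
          have hx0 : l x = 0 := le_antisymm hbx (hl x)
          have hb0 : l b = 0 := le_antisymm hbb (hl b)
          rw [hx0, hb0] at this
          simp at this
      · rintro rfl; exact hD0 x
    · intro x y z
      by_cases hxy : x = y
      · subst hxy; rw [hD0]; exact le_max_of_le_left (hnn x z)
      by_cases hxz : x = z
      · subst hxz; exact le_max_right _ _
      by_cases hzy : z = y
      · subst hzy; exact le_max_left _ _
      obtain ⟨q, hq⟩ := hpath x z
      obtain ⟨r, hr⟩ := hpath z y
      set t := q.append r with ht
      obtain ⟨⟨w, hw, hDw⟩, _⟩ := key x y hxy t.toPath.1 t.toPath.2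
      have hwt : w ∈ t.support := t.support_toPath_subset hw
      rw [SimpleGraph.Walk.mem_support_append_iff] at hwt
      rw [hDw]
      rcases hwt with hwq | hwr
      · exact le_max_of_le_left ((key x z hxz q hq).2 w hwq)
      · exact le_max_of_le_right ((key z y hzy r hr).2 w hwr)
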